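/- Let C be a triangulated category with a weight structure w, and let m ≤ n be integers. If an object M of C admits a weight filtration avoiding weights m,…,n, then this filtration is unique up to unique isomorphism: given two weight filtrations A → M → B → A[1] and A' → M → B' → A'[1] of M avoiding weights m,…,n, there is a unique isomorphism of triangles between them extending the identity of M. -/

import Mathlib

open CategoryTheory CategoryTheory.Limits CategoryTheory.Pretriangulated

universe v u

/-- The shift `S[n]` of a class of objects `S`: the objects isomorphic to `A⟦n⟧`
for some `A ∈ S`. -/
def shiftedSet {C : Type u} [Category.{v} C] [HasShift C ℤ] (S : Set C) (n : ℤ) : Set C :=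
  {X | ∃ A ∈ S, Nonempty (X ≅ A⟦n⟧)}

/-- A weight structure on a pretriangulated category `C`, following Bondarko. -/
structure WeightStructure (C : Type u) [Category.{v} C] [Preadditive C] [HasZeroObject C]
    [HasShift C ℤ] [∀ n : ℤ, (shiftFunctor C n).Additive] [Pretriangulated C] where
  /-- the objects of weights `≤ 0` -/
  le : Set C
  /-- the objects of weights `≥ 0` -/
  ge : Set C
  /-- `C_{w ≤ 0}` is closed under retracts -/
  retract_le : ∀ (X M : C) (i : X ⟶ M) (r : M ⟶ X), i ≫ r = 𝟙 X → M ∈ le → X ∈ le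
  /-- `C_{w ≥ 0}` is closed under retracts -/
  retract_ge : ∀ (X M : C) (i : X ⟶ M) (r : M ⟶ X), i ≫ r = 𝟙 X → M ∈ ge → X ∈ ge
  /-- `C_{w ≤ 0} ⊆ C_{w ≤ 1}` -/
  le_shift : le ⊆ shiftedSet le 1
  /-- `C_{w ≥ 1} ⊆ C_{w ≥ 0}` -/
  ge_shift : shiftedSet ge 1 ⊆ ge
  /-- orthogonality -/
  orth : ∀ (M N : C), M ∈ le → N ∈ shiftedSet ge 1 → ∀ f : M ⟶ N, f = 0
  /-- existence of weight filtrations -/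
  exists_wf : ∀ M : C, ∃ (A B : C) (a : A ⟶ M) (b : M ⟶ B) (δ : B ⟶ A⟦(1:ℤ)⟧),
    Triangle.mk a b δ ∈ (distTriang C) ∧ A ∈ le ∧ B ∈ shiftedSet ge 1

namespace WeightStructure

variable {C : Type u} [Category.{v} C] [Preadditive C] [HasZeroObject C]
  [HasShift C ℤ] [∀ n : ℤ, (shiftFunctor C n).Additive] [Pretriangulated C]

/-- `C_{w ≤ n} := C_{w ≤ 0}[n]`. -/
def wLE (w : WeightStructure C) (n : ℤ) : Set C := shiftedSet w.le n

/-- `C_{w ≥ n} := C_{w ≥ 0}[n]`. -/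
def wGE (w : WeightStructure C) (n : ℤ) : Set C := shiftedSet w.ge n

/-- The heart `C_{w = 0} := C_{w ≤ 0} ∩ C_{w ≥ 0}`. -/
def heart (w : WeightStructure C) : Set C := w.le ∩ w.ge

/-- An object `M` is without weights `m, …, n` if it admits a weight filtration
avoiding these weights. -/
def WithoutWeights (w : WeightStructure C) (m n : ℤ) (M : C) : Prop :=
  ∃ (A B : C) (a : A ⟶ M) (b : M ⟶ B) (δ : B ⟶ A⟦(1:ℤ)⟧),
    Triangle.mk a b δ ∈ (distTriang C) ∧ A ∈ w.wLE (m - 1) ∧ B ∈ w.wGE (n + 1)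

end WeightStructure

namespace WeightStructure

variable {C : Type u} [Category.{v} C] [Preadditive C] [HasZeroObject C]
  [HasShift C ℤ] [∀ n : ℤ, (shiftFunctor C n).Additive] [Pretriangulated C]

lemma mem_ge_of_iso (w : WeightStructure C) {X Y : C} (e : X ≅ Y) (hY : Y ∈ w.ge) :
    X ∈ w.ge :=
  w.retract_ge X Y e.hom e.inv e.hom_inv_id hY

lemma shift_mem_ge_nat (w : WeightStructure C) {B : C} (hB : B ∈ w.ge) (j : ℕ) :
    (B⟦(j : ℤ)⟧ : C) ∈ w.ge := by
  induction j with
  | zero =>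
      rw [Nat.cast_zero]
      exact w.mem_ge_of_iso ((shiftFunctorZero C ℤ).app B) hB
  | succ j ih =>
      rw [Nat.cast_add, Nat.cast_one]
      refine w.mem_ge_of_iso ((shiftFunctorAdd' C (j : ℤ) 1 ((j : ℤ) + 1) rfl).app B)
        (w.ge_shift ⟨B⟦(j : ℤ)⟧, ih, ⟨Iso.refl _⟩⟩)

lemma mem_ge_shift_one (w : WeightStructure C) {B : C} (hB : B ∈ w.ge) {k : ℤ}
    (hk : 1 ≤ k) : (B⟦k⟧ : C) ∈ shiftedSet w.ge 1 := by
  obtain ⟨j, rfl⟩ : ∃ j : ℕ, k = (j : ℤ) + 1 := ⟨(k - 1).toNat, by omega⟩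
  exact ⟨B⟦(j : ℤ)⟧, w.shift_mem_ge_nat hB j,
    ⟨(shiftFunctorAdd' C (j : ℤ) 1 ((j : ℤ) + 1) rfl).app B⟩⟩

lemma shift_mem_shiftedSet {S : Set C} {X : C} {p : ℤ} (hX : X ∈ shiftedSet S p)
    (t q : ℤ) (hq : p + t = q) : (X⟦t⟧ : C) ∈ shiftedSet S q := by
  obtain ⟨A, hA, ⟨e⟩⟩ := hX
  exact ⟨A, hA, ⟨(shiftFunctor C t).mapIso e ≪≫
    ((shiftFunctorAdd' C p t q hq).app A).symm⟩⟩

/-- Orthogonality for weight structures: no nonzero maps from weights `≤ p` to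
weights `≥ q` when `p < q`. -/
lemma hom_zero (w : WeightStructure C) {p q : ℤ} (hpq : p < q) {X Y : C}
    (hX : X ∈ w.wLE p) (hY : Y ∈ w.wGE q) (f : X ⟶ Y) : f = 0 := by
  obtain ⟨A0, hA0, ⟨eX⟩⟩ := hX
  obtain ⟨B0, hB0, ⟨eY⟩⟩ := hY
  have e2 : (B0⟦q⟧ : C) ≅ (B0⟦q - p⟧)⟦p⟧ :=
    (shiftFunctorAdd' C (q - p) p q (by ring)).app B0
  set g : (A0⟦p⟧ : C) ⟶ (B0⟦q - p⟧)⟦p⟧ := eX.inv ≫ f ≫ eY.hom ≫ e2.hom with hg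
  obtain ⟨h, hh⟩ : ∃ h : A0 ⟶ B0⟦q - p⟧, (shiftFunctor C p).map h = g :=
    ⟨(shiftFunctor C p).preimage g, Functor.map_preimage _ _⟩
  have hz : h = 0 := w.orth _ _ hA0 (w.mem_ge_shift_one hB0 (by omega)) h
  have hg0 : g = 0 := by rw [← hh, hz, Functor.map_zero]
  have hf : f = eX.hom ≫ g ≫ e2.inv ≫ eY.inv := by simp [hg]
  rw [hf, hg0, zero_comp, comp_zero]

end WeightStructure

/-- A weight filtration avoiding weights `m, …, n` is unique up to unique isomorphism. -/
theorem weightFiltration_unique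
    {C : Type u} [Category.{v} C] [Preadditive C] [HasZeroObject C]
    [HasShift C ℤ] [∀ n : ℤ, (shiftFunctor C n).Additive] [Pretriangulated C]
    (w : WeightStructure C) (m n : ℤ) (hmn : m ≤ n)
    (M A B A' B' : C)
    (a : A ⟶ M) (b : M ⟶ B) (δ : B ⟶ A⟦(1:ℤ)⟧)
    (hT : Triangle.mk a b δ ∈ distTriang C)
    (hA : A ∈ w.wLE (m - 1)) (hB : B ∈ w.wGE (n + 1))
    (a' : A' ⟶ M) (b' : M ⟶ B') (δ' : B' ⟶ A'⟦(1:ℤ)⟧)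
    (hT' : Triangle.mk a' b' δ' ∈ distTriang C)
    (hA' : A' ∈ w.wLE (m - 1)) (hB' : B' ∈ w.wGE (n + 1)) :
    ∃ (β : A ⟶ A') (γ : B ⟶ B'), IsIso β ∧ IsIso γ ∧
      β ≫ a' = a ∧ b ≫ γ = b' ∧ δ ≫ (shiftFunctor C (1:ℤ)).map β = γ ≫ δ' ∧
      ∀ (β' : A ⟶ A') (γ' : B ⟶ B'),
        β' ≫ a' = a → b ≫ γ' = b' → δ ≫ (shiftFunctor C (1:ℤ)).map β' = γ' ≫ δ' →
        β' = β ∧ γ' = γ := by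
  -- general uniqueness lemma for any weight filtration of `M` avoiding `m, …, n`
  have key : ∀ (A₁ B₁ : C) (a₁ : A₁ ⟶ M) (b₁ : M ⟶ B₁) (δ₁ : B₁ ⟶ A₁⟦(1:ℤ)⟧),
      Triangle.mk a₁ b₁ δ₁ ∈ (distTriang C) → A₁ ∈ w.wLE (m - 1) → B₁ ∈ w.wGE (n + 1) →
      (∀ X : C, X ∈ w.wLE (m - 1) → ∀ φ₁ φ₂ : X ⟶ A₁, φ₁ ≫ a₁ = φ₂ ≫ a₁ → φ₁ = φ₂) ∧
      (∀ Y : C, Y ∈ w.wGE (n + 1) → ∀ ψ₁ ψ₂ : B₁ ⟶ Y, b₁ ≫ ψ₁ = b₁ ≫ ψ₂ → ψ₁ = ψ₂) := by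
    intro A₁ B₁ a₁ b₁ δ₁ hT₁ hA₁ hB₁
    constructor
    · intro X hX φ₁ φ₂ hφ
      have h0 : (φ₁ - φ₂) ≫ a₁ = 0 := by rw [Preadditive.sub_comp, hφ, sub_self]
      obtain ⟨g, hg⟩ := Triangle.coyoneda_exact₂ _
        (inv_rot_of_distTriang _ hT₁) (φ₁ - φ₂) h0
      have hB₁' : (B₁⟦(-1:ℤ)⟧ : C) ∈ w.wGE n :=
        WeightStructure.shift_mem_shiftedSet hB₁ (-1) n (by ring)
      have : g = 0 := w.hom_zero (by omega) hX hB₁' g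
      have : φ₁ - φ₂ = 0 := by rw [hg, this, zero_comp]; rfl
      rw [← sub_eq_zero]; exact this
    · intro Y hY ψ₁ ψ₂ hψ
      have h0 : b₁ ≫ (ψ₁ - ψ₂) = 0 := by rw [Preadditive.comp_sub, hψ, sub_self]
      obtain ⟨g, hg⟩ := Triangle.yoneda_exact₂ _
        (rot_of_distTriang _ hT₁) (ψ₁ - ψ₂) h0
      have hA₁' : (A₁⟦(1:ℤ)⟧ : C) ∈ w.wLE m :=
        WeightStructure.shift_mem_shiftedSet hA₁ 1 m (by ring)
      have : g = 0 := w.hom_zero (by omega) hA₁' hY g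
      have : ψ₁ - ψ₂ = 0 := by rw [hg, this, comp_zero]; rfl
      rw [← sub_eq_zero]; exact this
  obtain ⟨uA, uB⟩ := key A B a b δ hT hA hB
  obtain ⟨uA', uB'⟩ := key A' B' a' b' δ' hT' hA' hB'
  -- construct `β`
  have hab' : a ≫ b' = 0 := w.hom_zero (by omega) hA hB' _
  obtain ⟨β, hβ⟩ : ∃ β : A ⟶ A', a = β ≫ a' := Triangle.coyoneda_exact₂ _ hT' a hab'
  -- complete to a morphism of triangles
  obtain ⟨γ, hγ₁, hγ₂⟩ : ∃ γ : B ⟶ B', b ≫ γ = 𝟙 M ≫ b' ∧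
      δ ≫ (shiftFunctor C (1:ℤ)).map β = γ ≫ δ' := Pretriangulated.complete_distinguished_triangle_morphism _ _
    hT hT' β (𝟙 M) (by change a ≫ 𝟙 M = β ≫ a'; rw [Category.comp_id]; exact hβ)
  rw [Category.id_comp] at hγ₁
  -- construct the inverse `β̃`, `γ̃`
  have hab : a' ≫ b = 0 := w.hom_zero (by omega) hA' hB _
  obtain ⟨β', hβ'⟩ : ∃ β' : A' ⟶ A, a' = β' ≫ a := Triangle.coyoneda_exact₂ _ hT a' hab
  obtain ⟨γ', hγ'₁, _⟩ : ∃ γ' : B' ⟶ B, b' ≫ γ' = 𝟙 M ≫ b ∧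
      δ' ≫ (shiftFunctor C (1:ℤ)).map β' = γ' ≫ δ := Pretriangulated.complete_distinguished_triangle_morphism _ _
    hT' hT β' (𝟙 M) (by change a' ≫ 𝟙 M = β' ≫ a; rw [Category.comp_id]; exact hβ')
  rw [Category.id_comp] at hγ'₁
  have hββ' : β ≫ β' = 𝟙 A := uA A hA _ _ (by rw [Category.assoc, ← hβ', ← hβ, Category.id_comp])
  have hβ'β : β' ≫ β = 𝟙 A' := uA' A' hA' _ _ (by rw [Category.assoc, ← hβ, ← hβ', Category.id_comp])
  have hγγ' : γ ≫ γ' = 𝟙 B := uB B hB _ _ (by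
    rw [← Category.assoc, hγ₁, hγ'₁, Category.comp_id])
  have hγ'γ : γ' ≫ γ = 𝟙 B' := uB' B' hB' _ _ (by
    rw [← Category.assoc, hγ'₁, hγ₁, Category.comp_id])
  refine ⟨β, γ, ⟨β', hββ', hβ'β⟩, ⟨γ', hγγ', hγ'γ⟩, hβ.symm, hγ₁, hγ₂, ?_⟩
  intro β₁ γ₁ h₁ h₂ _
  exact ⟨uA' A hA _ _ (by rw [h₁, hβ]), uB B' hB' _ _ (by rw [h₂, hγ₁])⟩
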